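/- Let f : ℕ^U → ℝ be monotone and submodular on the integer lattice with f(0) = 0, and let b* ∈ ℕ^U. Order the support of b* as indices i*_1, ..., i*_m with values s*_1, ..., s*_m, such that for each k, the marginal gain f(Σ_{j<k} s*_j χ_{i*_j} + s*_k χ_{i*_k}) - f(Σ_{j<k} s*_j χ_{i*_j}) is maximal among remaining indices. Then f(s*_1 χ_{i*_1}) ≥ f(s*_1 χ_{i*_1} + s*_2 χ_{i*_2}) - f(s*_1 χ_{i*_1}) ≥ f(s*_1 χ_{i*_1} + s*_2 χ_{i*_2} + s*_3 χ_{i*_3}) - f(s*_1 χ_{i*_1} + s*_2 χ_{i*_2}); in particular the first marginal gain is at least one third of f(s*_1 χ_{i*_1} + s*_2 χ_{i*_2} + s*_3 χ_{i*_3}). -/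
import Mathlib

lemma aux_disj {U : ℕ} (i i' : Fin U) (h : i ≠ i') (s s' : ℕ) (a : Fin U → ℕ) :
    (a + Pi.single i s) ⊔ (a + Pi.single i' s') = a + Pi.single i s + Pi.single i' s' ∧
    (a + Pi.single i s) ⊓ (a + Pi.single i' s') = a := by
  constructor <;> funext j <;>
  · simp only [Pi.sup_apply, Pi.inf_apply, Pi.add_apply, Pi.single_apply]
    rcases eq_or_ne j i with rfl | hji <;> rcases eq_or_ne j i' with rfl | hji'
    · exact absurd rfl h
    all_goals simp_all <;> omega

/-- Greedy ordering of the first three support elements of `b*`: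
`(i₁,s₁)` maximizes the marginal gain w.r.t. `0` (in particular over `(i₂,s₂)` and `(i₃,s₃)`),
and `(i₂,s₂)` maximizes the marginal gain w.r.t. `s₁·χ_{i₁}` (in particular over `(i₃,s₃)`). -/
theorem stmt_11 (U : ℕ) (f : (Fin U → ℕ) → ℝ)
    (hmono : ∀ x y : Fin U → ℕ, x ≤ y → f x ≤ f y)
    (hsub : ∀ x y : Fin U → ℕ, f (x ⊔ y) + f (x ⊓ y) ≤ f x + f y)
    (hzero : f 0 = 0)
    (i₁ i₂ i₃ : Fin U) (h12 : i₁ ≠ i₂) (h13 : i₁ ≠ i₃) (h23 : i₂ ≠ i₃)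
    (s₁ s₂ s₃ : ℕ)
    (hg12 : f (Pi.single i₂ s₂) - f 0 ≤ f (Pi.single i₁ s₁) - f 0)
    (hg13 : f (Pi.single i₃ s₃) - f 0 ≤ f (Pi.single i₁ s₁) - f 0)
    (hg23 : f (Pi.single i₁ s₁ + Pi.single i₃ s₃) - f (Pi.single i₁ s₁) ≤
      f (Pi.single i₁ s₁ + Pi.single i₂ s₂) - f (Pi.single i₁ s₁)) :
    f (Pi.single i₁ s₁) ≥
        f (Pi.single i₁ s₁ + Pi.single i₂ s₂) - f (Pi.single i₁ s₁) ∧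
      f (Pi.single i₁ s₁ + Pi.single i₂ s₂) - f (Pi.single i₁ s₁) ≥
        f (Pi.single i₁ s₁ + Pi.single i₂ s₂ + Pi.single i₃ s₃) -
          f (Pi.single i₁ s₁ + Pi.single i₂ s₂) ∧
      f (Pi.single i₁ s₁) ≥
        (1 / 3) * f (Pi.single i₁ s₁ + Pi.single i₂ s₂ + Pi.single i₃ s₃) := by
  set x₁ : Fin U → ℕ := Pi.single i₁ s₁
  set x₂ : Fin U → ℕ := Pi.single i₂ s₂
  set x₃ : Fin U → ℕ := Pi.single i₃ s₃
  -- sub 1: f(x₁+x₂) + f 0 ≤ f x₁ + f x₂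
  have e1 := aux_disj i₁ i₂ h12 s₁ s₂ 0
  have h1 := hsub (0 + x₁) (0 + x₂)
  rw [e1.1, e1.2] at h1
  simp only [zero_add] at h1
  -- sub 2: f(x₁+x₂+x₃) + f x₁ ≤ f(x₁+x₂) + f(x₁+x₃)
  have e2 := aux_disj i₃ i₂ h23.symm s₃ s₂ x₁
  have h2 := hsub (x₁ + x₃) (x₁ + x₂)
  rw [e2.1, e2.2] at h2
  have hx : x₁ + x₃ + x₂ = x₁ + x₂ + x₃ := by ring
  rw [hx] at h2
  have g1 : f (x₁ + x₂) - f x₁ ≤ f x₁ := by linarith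
  have g2 : f (x₁ + x₂ + x₃) - f (x₁ + x₂) ≤ f (x₁ + x₂) - f x₁ := by linarith
  refine ⟨g1, g2, by linarith⟩
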